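/- arXiv:1301.0031 — 2 statements merged into one kernel-verified Lean document; each statement's English description precedes it below -/
import Mathlib

section
/- Let C be a category and M a multiplicative system in C, with localization functor L : C ⥤ C_M. For every n ≥ 0, the induced functor on diagram categories from the category of diagrams in C indexed by the linearly ordered poset {1 < 2 < ⋯ < n} to the category of diagrams in C_M indexed by the same poset (i.e. the functor given by postcomposition with L, equivalently the induced functor on categories of n−1 composable arrows) is essentially surjective: every such diagram in C_M is isomorphic to the image under L of a diagram in C. -/
open CategoryTheory

/-- A multiplicative system in the sense of Definition `DefAppMult` (Fr1–Fr4). -/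
structure IsMultiplicativeSystem {C : Type*} [Category C] (M : MorphismProperty C) : Prop where
  fr1 : ∀ X : C, M (𝟙 X)
  fr2 : ∀ ⦃X Y Z W : C⦄ (f : X ⟶ Y) (g : Y ⟶ Z) (h : Z ⟶ W),
    M (f ≫ g) → M (g ≫ h) → M f ∧ M g ∧ M h ∧ M (f ≫ g ≫ h)
  fr3 : ∀ ⦃X Y : C⦄ (f g : X ⟶ Y),
    (∃ (X' : C) (s : X' ⟶ X), M s ∧ s ≫ f = s ≫ g) ↔
    (∃ (Y' : C) (t : Y ⟶ Y'), M t ∧ f ≫ t = g ≫ t)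
  fr4 : ∀ ⦃X Y X' : C⦄ (s : X ⟶ Y) (f : X ⟶ X'), M s →
    ∃ (Y' : C) (s' : X' ⟶ Y') (f' : Y ⟶ Y'), M s' ∧ s ≫ f' = f ≫ s'
  fr4' : ∀ ⦃Y Y' X' : C⦄ (f' : Y ⟶ Y') (s' : X' ⟶ Y'), M s' →
    ∃ (X : C) (s : X ⟶ Y) (f : X ⟶ X'), M s ∧ s ≫ f' = f ≫ s'

theorem aux_isMultiplicative {C : Type*} [Category C] {M : MorphismProperty C}
    (hM : IsMultiplicativeSystem M) : M.IsMultiplicative where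
  id_mem := hM.fr1
  comp_mem f g hf hg := by
    have := hM.fr2 f (𝟙 _) g (by simpa using hf) (by simpa using hg)
    simpa using this.2.2.2

theorem aux_hasLeft {C : Type*} [Category C] {M : MorphismProperty C}
    (hM : IsMultiplicativeSystem M) : M.HasLeftCalculusOfFractions := by
  have := aux_isMultiplicative hM
  exact
  { exists_leftFraction := fun X Y φ => by
      obtain ⟨Y', s', f', hs', fac⟩ := hM.fr4 φ.s φ.f φ.hs
      exact ⟨MorphismProperty.LeftFraction.mk f' s' hs', fac.symm⟩
    ext := fun X' X Y f₁ f₂ s hs h => by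
      obtain ⟨Y', t, ht, fac⟩ := (hM.fr3 f₁ f₂).1 ⟨X', s, hs, h⟩
      exact ⟨Y', t, ht, fac⟩ }

/-- Lemma `LemA0_5`: for a multiplicative system `M` in `C` with localisation functor
`L = M.Q : C ⥤ C_M`, for every `n ≥ 0` the induced functor from diagrams in `C` indexed
by the linear poset with `n` elements to diagrams in `C_M` indexed by the same poset
(postcomposition with `L`) is essentially surjective (dense). -/
theorem stmt_13 {C : Type*} [Category C] (M : MorphismProperty C)
    (hM : IsMultiplicativeSystem M) (n : ℕ) :
    ((Functor.whiskeringRight (Fin n) C M.Localization).obj M.Q).EssSurj := by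
  have := aux_hasLeft hM
  cases n with
  | zero =>
    refine ⟨fun F => ⟨⟨fun i => i.elim0, fun {i} _ _ => i.elim0, ?_, ?_⟩ , ⟨NatIso.ofComponents (fun i => i.elim0) (fun {i} _ _ => i.elim0)⟩⟩⟩
    · intro i; exact i.elim0
    · intro i; exact i.elim0
  | succ n =>
    exact Localization.essSurj_mapComposableArrows M.Q M n
end

section
/- Let C be an additive category and M a multiplicative system in C, with localization functor L : C ⥤ C_M. For an object X of C, the image L X is a zero object of C_M if and only if the unique morphism X ⟶ 0 (into a zero object of C) belongs to M, and this holds if and only if the unique morphism 0 ⟶ X belongs to M. -/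
open CategoryTheory

open CategoryTheory.Limits ZeroObject

section Aux

variable {C : Type*} [Category C] {M : MorphismProperty C}

lemma IsMultiplicativeSystem.isMultiplicative (hM : IsMultiplicativeSystem M) :
    M.IsMultiplicative where
  id_mem := hM.fr1
  comp_mem f g hf hg := by
    have := hM.fr2 f (𝟙 _) g (by simpa using hf) (by simpa using hg)
    simpa using this.2.2.2

lemma IsMultiplicativeSystem.hasLeftCalculusOfFractions (hM : IsMultiplicativeSystem M) :
    M.HasLeftCalculusOfFractions := by
  haveI := hM.isMultiplicative
  exact
    { exists_leftFraction := fun X Y φ => by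
        obtain ⟨Y', s', f', hs', fac⟩ := hM.fr4 φ.s φ.f φ.hs
        exact ⟨⟨f', s', hs'⟩, fac.symm⟩
      ext := fun X' X Y f₁ f₂ s hs eq => by
        obtain ⟨Y', t, ht, fac⟩ := (hM.fr3 f₁ f₂).1 ⟨X', s, hs, eq⟩
        exact ⟨Y', t, ht, fac⟩ }

variable [Preadditive C] [HasZeroObject C]

/-- From `M (0 : X ⟶ Z)` we get all three "zero" memberships. -/
lemma IsMultiplicativeSystem.of_zero (hM : IsMultiplicativeSystem M) {X Z : C}
    (h : M (0 : X ⟶ Z)) :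
    M (0 : X ⟶ 0) ∧ M (0 : (0 : C) ⟶ Z) ∧ M (0 : Z ⟶ 0) := by
  have h1 : M ((0 : X ⟶ (0 : C)) ≫ (0 : (0 : C) ⟶ Z)) := by simpa using h
  have h2 : M ((0 : (0 : C) ⟶ Z) ≫ (0 : Z ⟶ (0 : C))) := by
    have : ((0 : (0 : C) ⟶ Z) ≫ (0 : Z ⟶ (0 : C))) = 𝟙 (0 : C) :=
      (isZero_zero C).eq_of_src _ _
    rw [this]
    exact hM.fr1 _
  obtain ⟨hf, hg, hh, -⟩ := hM.fr2 _ _ _ h1 h2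
  exact ⟨hf, hg, hh⟩

lemma IsMultiplicativeSystem.zero_to_iff_from (hM : IsMultiplicativeSystem M) (X : C) :
    M (0 : X ⟶ 0) ↔ M (0 : (0 : C) ⟶ X) := by
  constructor
  · intro h
    obtain ⟨X', s, hs, fac⟩ := (hM.fr3 (𝟙 X) (0 : X ⟶ X)).2
      ⟨0, 0, h, by simp⟩
    rw [Category.comp_id, comp_zero] at fac
    rw [fac] at hs
    exact (hM.of_zero hs).2.1
  · intro h
    obtain ⟨Y', t, ht, fac⟩ := (hM.fr3 (𝟙 X) (0 : X ⟶ X)).1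
      ⟨0, 0, h, by simp⟩
    rw [Category.id_comp, zero_comp] at fac
    rw [fac] at ht
    exact (hM.of_zero ht).1

end Aux

/-- Remark `RemA2.(1)`: let `C` be an additive category and `M` a multiplicative system
in `C` with localisation functor `L = M.Q`. For an object `X` of `C`, the image `L X` is
a zero object of `C_M` if and only if the unique morphism `X ⟶ 0` lies in `M`, and this
holds if and only if the unique morphism `0 ⟶ X` lies in `M`. -/
theorem stmt_15 {C : Type*} [Category C] [Preadditive C] [HasZeroObject C]
    [HasFiniteBiproducts C]
    (M : MorphismProperty C) (hM : IsMultiplicativeSystem M) (X : C) :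
    (IsZero (M.Q.obj X) ↔ M (0 : X ⟶ 0)) ∧
    (M (0 : X ⟶ 0) ↔ M (0 : (0 : C) ⟶ X)) := by
  haveI := hM.isMultiplicative
  haveI := hM.hasLeftCalculusOfFractions
  refine ⟨⟨fun hZ => ?_, fun h => ?_⟩, hM.zero_to_iff_from X⟩
  · -- IsZero (Q.obj X) → M (0 : X ⟶ 0)
    have heq : M.Q.map (𝟙 X) = M.Q.map (0 : X ⟶ X) := by
      rw [M.Q.map_id, M.Q.map_zero]
      exact hZ.eq_of_src _ _
    obtain ⟨Z, s, hs, fac⟩ := (MorphismProperty.map_eq_iff_postcomp M.Q M _ _).1 heq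
    rw [Category.id_comp, zero_comp] at fac
    rw [fac] at hs
    exact (hM.of_zero hs).1
  · -- M (0 : X ⟶ 0) → IsZero (Q.obj X)
    have : IsIso (M.Q.map (0 : X ⟶ 0)) := Localization.inverts M.Q M _ h
    have hz0 : IsZero (M.Q.obj (0 : C)) := by
      rw [IsZero.iff_id_eq_zero, ← M.Q.map_id, ← M.Q.map_zero]
      congr 1
      exact (isZero_zero C).eq_of_src _ _
    exact hz0.of_iso (asIso (M.Q.map (0 : X ⟶ 0)))
end
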